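/- arXiv:hep-th/9809149 — 2 statements merged into one kernel-verified Lean document; each statement's English description precedes it below -/
import Mathlib

section
/- Let z₁,…,z_M : ℝ^{1+n} → ℂ be C² maps satisfying □₂ z_i = 0 and ∂^μ z_i ∂_μ z_j = 0 for all 1 ≤ i,j ≤ M. Let f_j, g_j : ℂ^M × ℂ̄^M → ℂ be C¹ functions (of the variables z_k and their conjugates z̄_k) satisfying ∂f_j/∂z̄_k + ∂g_k/∂z_j = 0 for all j,k. Then the currents J_μ = Σ_{j=1}^M ( f_j(Z,Z̄) ∂_μ z_j + g_j(Z,Z̄) ∂_μ z̄_j ) are conserved: ∂^μ J_μ = 0. -/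
/-- Partial derivative in the μ-th coordinate direction. -/
noncomputable def pd {n : ℕ} (μ : Fin (n+1)) (u : (Fin (n+1) → ℝ) → ℂ) :
    (Fin (n+1) → ℝ) → ℂ :=
  fun x => fderiv ℝ u x (Pi.single μ 1)

/-- The d'Alembertian □₂ = ∂₀² − Σⱼ ∂ⱼ² on ℝ^{1+n}. -/
noncomputable def box2 {n : ℕ} (u : (Fin (n+1) → ℝ) → ℂ) :
    (Fin (n+1) → ℝ) → ℂ :=
  fun x => pd 0 (pd 0 u) x - ∑ j : Fin n, pd j.succ (pd j.succ u) x

/-- Wirtinger derivative ∂/∂z_k of a function F : ℂ^M → ℂ (viewed as a real-smooth map). -/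
noncomputable def wD {M : ℕ} (k : Fin M) (F : (Fin M → ℂ) → ℂ) : (Fin M → ℂ) → ℂ :=
  fun Z => (fderiv ℝ F Z (Pi.single k 1) - Complex.I * fderiv ℝ F Z (Pi.single k Complex.I)) / 2

/-- Wirtinger derivative ∂/∂z̄_k of a function F : ℂ^M → ℂ. -/
noncomputable def wDbar {M : ℕ} (k : Fin M) (F : (Fin M → ℂ) → ℂ) : (Fin M → ℂ) → ℂ :=
  fun Z => (fderiv ℝ F Z (Pi.single k 1) + Complex.I * fderiv ℝ F Z (Pi.single k Complex.I)) / 2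

open Complex Finset

section Helpers

lemma wirt (a b c : ℂ) : (a - I*b)/2 * c + (a + I*b)/2 * (starRingEnd ℂ c)
    = (c.re:ℂ) * a + (c.im:ℂ) * b := by
  have hc : (starRingEnd ℂ) c = (c.re:ℂ) - c.im * I := by
    simp [Complex.ext_iff]
  have hc2 : c = (c.re:ℂ) + c.im * I := (Complex.re_add_im c).symm
  rw [hc]
  nth_rewrite 1 [hc2]
  linear_combination (-(c.im:ℂ) * b) * Complex.I_sq

lemma pd_mul {n : ℕ} (μ : Fin (n+1)) (u v : (Fin (n+1) → ℝ) → ℂ) (x)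
    (hu : DifferentiableAt ℝ u x) (hv : DifferentiableAt ℝ v x) :
    pd μ (fun y => u y * v y) x = pd μ u x * v x + u x * pd μ v x := by
  unfold pd
  rw [fderiv_fun_mul hu hv]
  simp [smul_eq_mul]
  ring

lemma pd_add {n : ℕ} (μ : Fin (n+1)) (u v : (Fin (n+1) → ℝ) → ℂ) (x)
    (hu : DifferentiableAt ℝ u x) (hv : DifferentiableAt ℝ v x) :
    pd μ (fun y => u y + v y) x = pd μ u x + pd μ v x := by
  unfold pd
  rw [fderiv_fun_add hu hv]
  simp

lemma pd_sum {n : ℕ} {ι : Type*} (s : Finset ι) (μ : Fin (n+1))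
    (u : ι → (Fin (n+1) → ℝ) → ℂ) (x)
    (hu : ∀ i ∈ s, DifferentiableAt ℝ (u i) x) :
    pd μ (fun y => ∑ i ∈ s, u i y) x = ∑ i ∈ s, pd μ (u i) x := by
  unfold pd
  rw [fderiv_fun_sum hu]
  simp

lemma pd_conj {n : ℕ} (μ : Fin (n+1)) (u : (Fin (n+1) → ℝ) → ℂ) (x)
    (hu : DifferentiableAt ℝ u x) :
    pd μ (fun y => (starRingEnd ℂ) (u y)) x = (starRingEnd ℂ) (pd μ u x) := by
  unfold pd
  have h := (Complex.conjCLE.toContinuousLinearMap.hasFDerivAt.comp x hu.hasFDerivAt).fderiv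
  have he : (fun y => (starRingEnd ℂ) (u y)) = Complex.conjCLE.toContinuousLinearMap ∘ u := rfl
  rw [he, h]
  rfl

lemma clm_single {M : ℕ} (L : (Fin M → ℂ) →L[ℝ] ℂ) (k : Fin M) (c : ℂ) :
    L (Pi.single k c) = (c.re : ℂ) * L (Pi.single k 1) + (c.im : ℂ) * L (Pi.single k Complex.I) := by
  have h : (Pi.single k c : Fin M → ℂ)
      = c.re • (Pi.single k (1:ℂ) : Fin M → ℂ) + c.im • (Pi.single k (I:ℂ) : Fin M → ℂ) := by
    rw [← Pi.single_smul, ← Pi.single_smul, ← Pi.single_add]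
    simp [Complex.real_smul, Complex.re_add_im]
  rw [h, map_add, map_smul, map_smul]
  simp [Complex.real_smul]

lemma clm_decomp {M : ℕ} (L : (Fin M → ℂ) →L[ℝ] ℂ) (w : Fin M → ℂ) :
    L w = ∑ k : Fin M, ((L (Pi.single k 1) - I * L (Pi.single k I))/2 * w k
      + (L (Pi.single k 1) + I * L (Pi.single k I))/2 * (starRingEnd ℂ) (w k)) := by
  conv_lhs => rw [← Finset.univ_sum_single w, map_sum]
  refine Finset.sum_congr rfl fun k _ => ?_
  rw [wirt, clm_single]

lemma pd_comp {n M : ℕ} (F : (Fin M → ℂ) → ℂ) (hF : ContDiff ℝ 1 F)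
    (z : Fin M → (Fin (n+1) → ℝ) → ℂ) (μ : Fin (n+1)) (x)
    (hz : ∀ i, DifferentiableAt ℝ (z i) x) :
    pd μ (fun y => F (fun i => z i y)) x
      = ∑ k : Fin M, (wD k F (fun i => z i x) * pd μ (z k) x
          + wDbar k F (fun i => z i x) * (starRingEnd ℂ) (pd μ (z k) x)) := by
  set Z : (Fin (n+1) → ℝ) → (Fin M → ℂ) := fun y i => z i y with hZdef
  have hZ : DifferentiableAt ℝ Z x := differentiableAt_pi.2 hz
  have hFz : DifferentiableAt ℝ F (Z x) := (hF.differentiable one_ne_zero).differentiableAt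
  have h1 : fderiv ℝ (fun y => F (Z y)) x = (fderiv ℝ F (Z x)).comp (fderiv ℝ Z x) :=
    fderiv_comp x hFz hZ
  have hw : ∀ k, fderiv ℝ Z x (Pi.single μ 1) k = pd μ (z k) x := by
    intro k
    rw [fderiv_pi hz]
    rfl
  show fderiv ℝ (fun y => F (Z y)) x (Pi.single μ 1) = _
  rw [h1]
  simp only [ContinuousLinearMap.comp_apply]
  rw [clm_decomp]
  refine Finset.sum_congr rfl fun k _ => ?_
  rw [hw k]
  rfl

lemma algebra_key {n M : ℕ} (p q s t : Fin (n+1) → Fin M → ℂ)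
    (F G : Fin M → ℂ) (df dbf dg dbg : Fin M → Fin M → ℂ)
    (hQ : ∀ i j, p 0 i * p 0 j - ∑ l : Fin n, p l.succ i * p l.succ j = 0)
    (hQc : ∀ i j, q 0 i * q 0 j - ∑ l : Fin n, q l.succ i * q l.succ j = 0)
    (hW : ∀ j, s 0 j - ∑ l : Fin n, s l.succ j = 0)
    (hWc : ∀ j, t 0 j - ∑ l : Fin n, t l.succ j = 0)
    (hFG : ∀ j k, dbf j k + dg k j = 0) :
    (∑ j : Fin M, ((∑ k : Fin M, (df j k * p 0 k + dbf j k * q 0 k)) * p 0 j + F j * s 0 j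
       + (∑ k : Fin M, (dg j k * p 0 k + dbg j k * q 0 k)) * q 0 j + G j * t 0 j))
    - ∑ l : Fin n, ∑ j : Fin M,
       ((∑ k : Fin M, (df j k * p l.succ k + dbf j k * q l.succ k)) * p l.succ j + F j * s l.succ j
       + (∑ k : Fin M, (dg j k * p l.succ k + dbg j k * q l.succ k)) * q l.succ j + G j * t l.succ j)
      = 0 := by
  have key : ∀ (j : Fin M) (μ : Fin (n+1)),
      (∑ k : Fin M, (df j k * p μ k + dbf j k * q μ k)) * p μ j + F j * s μ j
        + (∑ k : Fin M, (dg j k * p μ k + dbg j k * q μ k)) * q μ j + G j * t μ j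
      = ∑ k : Fin M, ((df j k * p μ k + dbf j k * q μ k) * p μ j
          + (dg j k * p μ k + dbg j k * q μ k) * q μ j)
        + (F j * s μ j + G j * t μ j) := by
    intro j μ
    simp only [Finset.sum_add_distrib, add_mul, Finset.sum_mul]
    ring
  rw [Finset.sum_comm, ← Finset.sum_sub_distrib]
  have hstep : ∀ j : Fin M,
      ((∑ k : Fin M, (df j k * p 0 k + dbf j k * q 0 k)) * p 0 j + F j * s 0 j
       + (∑ k : Fin M, (dg j k * p 0 k + dbg j k * q 0 k)) * q 0 j + G j * t 0 j)
      - ∑ l : Fin n,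
       ((∑ k : Fin M, (df j k * p l.succ k + dbf j k * q l.succ k)) * p l.succ j + F j * s l.succ j
       + (∑ k : Fin M, (dg j k * p l.succ k + dbg j k * q l.succ k)) * q l.succ j + G j * t l.succ j)
      = ∑ k : Fin M,
          (dbf j k * (q 0 k * p 0 j - ∑ l : Fin n, q l.succ k * p l.succ j)
           + dg j k * (p 0 k * q 0 j - ∑ l : Fin n, p l.succ k * q l.succ j)) := by
    intro j
    rw [key j 0]
    rw [Finset.sum_congr rfl fun (l : Fin n) _ => key j l.succ]
    simp only [Finset.sum_add_distrib, add_mul, mul_sub, Finset.sum_sub_distrib, mul_assoc,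
      Finset.mul_sum]
    rw [Finset.sum_comm (f := fun (l : Fin n) (k : Fin M) => df j k * (p l.succ k * p l.succ j)),
      Finset.sum_comm (f := fun (l : Fin n) (k : Fin M) => dbf j k * (q l.succ k * p l.succ j)),
      Finset.sum_comm (f := fun (l : Fin n) (k : Fin M) => dg j k * (p l.succ k * q l.succ j)),
      Finset.sum_comm (f := fun (l : Fin n) (k : Fin M) => dbg j k * (q l.succ k * q l.succ j))]
    have hQ'' : (∑ k : Fin M, df j k * (p 0 k * p 0 j))
        - ∑ k : Fin M, ∑ l : Fin n, df j k * (p l.succ k * p l.succ j) = 0 := by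
      rw [← Finset.sum_sub_distrib]
      exact Finset.sum_eq_zero fun k _ => by
        rw [← Finset.mul_sum, ← mul_sub, hQ k j, mul_zero]
    have hQc'' : (∑ k : Fin M, dbg j k * (q 0 k * q 0 j))
        - ∑ k : Fin M, ∑ l : Fin n, dbg j k * (q l.succ k * q l.succ j) = 0 := by
      rw [← Finset.sum_sub_distrib]
      exact Finset.sum_eq_zero fun k _ => by
        rw [← Finset.mul_sum, ← mul_sub, hQc k j, mul_zero]
    have hW'' : F j * s 0 j - ∑ l : Fin n, F j * s l.succ j = 0 := by
      rw [← Finset.mul_sum, ← mul_sub, hW j, mul_zero]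
    have hWc'' : G j * t 0 j - ∑ l : Fin n, G j * t l.succ j = 0 := by
      rw [← Finset.mul_sum, ← mul_sub, hWc j, mul_zero]
    linear_combination hQ'' + hQc'' + hW'' + hWc''
  rw [Finset.sum_congr rfl fun (j : Fin M) _ => hstep j]
  rw [Finset.sum_congr rfl fun (j : Fin M) _ => Finset.sum_add_distrib]
  rw [Finset.sum_add_distrib, Finset.sum_comm (f := fun j k =>
    dg j k * (p 0 k * q 0 j - ∑ l : Fin n, p l.succ k * q l.succ j))]
  have : ∀ j k : Fin M, dg k j * (p 0 j * q 0 k - ∑ l : Fin n, p l.succ j * q l.succ k)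
      = dg k j * (q 0 k * p 0 j - ∑ l : Fin n, q l.succ k * p l.succ j) := by
    intro j k
    congr 1
    rw [mul_comm (p 0 j)]
    congr 1
    exact Finset.sum_congr rfl fun l _ => mul_comm _ _
  rw [Finset.sum_congr rfl fun (j : Fin M) _ => Finset.sum_congr rfl fun (k : Fin M) _ => this j k]
  rw [← Finset.sum_add_distrib]
  refine Finset.sum_eq_zero fun j _ => ?_
  rw [← Finset.sum_add_distrib]
  refine Finset.sum_eq_zero fun k _ => ?_
  rw [← add_mul, hFG j k, zero_mul]

end Helpers

theorem stmt2 {n M : ℕ} (z : Fin M → (Fin (n+1) → ℝ) → ℂ)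
    (hz : ∀ i, ContDiff ℝ 2 (z i))
    (hwave : ∀ i x, box2 (z i) x = 0)
    (hnull : ∀ i j x,
      pd 0 (z i) x * pd 0 (z j) x
        - ∑ l : Fin n, pd l.succ (z i) x * pd l.succ (z j) x = 0)
    (f g : Fin M → (Fin M → ℂ) → ℂ)
    (hf : ∀ j, ContDiff ℝ 1 (f j)) (hg : ∀ j, ContDiff ℝ 1 (g j))
    (hcond : ∀ j k Z, wDbar k (f j) Z + wD j (g k) Z = 0)
    (J : Fin (n+1) → (Fin (n+1) → ℝ) → ℂ)
    (hJ : J = fun μ x => ∑ j : Fin M,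
      (f j (fun i => z i x) * pd μ (z j) x
        + g j (fun i => z i x) * pd μ (fun y => starRingEnd ℂ (z j y)) x)) :
    ∀ x, pd 0 (J 0) x - ∑ l : Fin n, pd l.succ (J l.succ) x = 0 := by
  intro x
  have hzd : ∀ i, Differentiable ℝ (z i) := fun i => (hz i).differentiable two_ne_zero
  have hZ : Differentiable ℝ (fun y (i : Fin M) => z i y) := differentiable_pi.mpr hzd
  have hpdC : ∀ (μ : Fin (n+1)) (i : Fin M), ContDiff ℝ 1 (pd μ (z i)) := by
    intro μ i
    exact (ContinuousLinearMap.apply ℝ ℂ (Pi.single μ 1 : Fin (n+1) → ℝ)).contDiff.comp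
      ((hz i).fderiv_right (by norm_num))
  have hpdd : ∀ (μ : Fin (n+1)) (i : Fin M), Differentiable ℝ (pd μ (z i)) :=
    fun μ i => (hpdC μ i).differentiable one_ne_zero
  have hconjpd : ∀ (μ : Fin (n+1)) (j : Fin M),
      pd μ (fun y => (starRingEnd ℂ) (z j y)) = fun y => (starRingEnd ℂ) (pd μ (z j) y) :=
    fun μ j => funext fun y => pd_conj μ (z j) y ((hzd j).differentiableAt)
  have hfZ : ∀ j, Differentiable ℝ (fun y => f j (fun i => z i y)) :=
    fun j => ((hf j).differentiable one_ne_zero).comp hZ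
  have hgZ : ∀ j, Differentiable ℝ (fun y => g j (fun i => z i y)) :=
    fun j => ((hg j).differentiable one_ne_zero).comp hZ
  have hconjd : ∀ (μ : Fin (n+1)) (j : Fin M),
      Differentiable ℝ (fun y => (starRingEnd ℂ) (pd μ (z j) y)) :=
    fun μ j => Complex.conjCLE.differentiable.comp (hpdd μ j)
  have hE : ∀ μ : Fin (n+1),
      pd μ (fun x => ∑ j : Fin M, (f j (fun i => z i x) * pd μ (z j) x
          + g j (fun i => z i x) * pd μ (fun y => starRingEnd ℂ (z j y)) x)) x
      = ∑ j : Fin M, ((∑ k : Fin M, (wD k (f j) (fun i => z i x) * pd μ (z k) x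
            + wDbar k (f j) (fun i => z i x) * (starRingEnd ℂ) (pd μ (z k) x))) * pd μ (z j) x
          + f j (fun i => z i x) * pd μ (pd μ (z j)) x
          + (∑ k : Fin M, (wD k (g j) (fun i => z i x) * pd μ (z k) x
            + wDbar k (g j) (fun i => z i x) * (starRingEnd ℂ) (pd μ (z k) x)))
              * (starRingEnd ℂ) (pd μ (z j) x)
          + g j (fun i => z i x) * (starRingEnd ℂ) (pd μ (pd μ (z j)) x)) := by
    intro μ
    simp only [hconjpd]
    have hsum : pd μ (fun y => ∑ j : Fin M, (f j (fun i => z i y) * pd μ (z j) y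
        + g j (fun i => z i y) * (starRingEnd ℂ) (pd μ (z j) y))) x
        = ∑ j : Fin M, pd μ (fun y => f j (fun i => z i y) * pd μ (z j) y
          + g j (fun i => z i y) * (starRingEnd ℂ) (pd μ (z j) y)) x :=
      pd_sum Finset.univ μ _ x (fun j _ =>
        ((hfZ j x).mul (hpdd μ j x)).add ((hgZ j x).mul (hconjd μ j x)))
    rw [hsum]
    refine Finset.sum_congr rfl fun j _ => ?_
    have e1 : pd μ (fun y => f j (fun i => z i y) * pd μ (z j) y
        + g j (fun i => z i y) * (starRingEnd ℂ) (pd μ (z j) y)) x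
        = pd μ (fun y => f j (fun i => z i y) * pd μ (z j) y) x
          + pd μ (fun y => g j (fun i => z i y) * (starRingEnd ℂ) (pd μ (z j) y)) x :=
      pd_add μ _ _ x ((hfZ j x).mul (hpdd μ j x)) ((hgZ j x).mul (hconjd μ j x))
    have e2 : pd μ (fun y => f j (fun i => z i y) * pd μ (z j) y) x
        = pd μ (fun y => f j (fun i => z i y)) x * pd μ (z j) x
          + f j (fun i => z i x) * pd μ (pd μ (z j)) x :=
      pd_mul μ _ _ x (hfZ j x) (hpdd μ j x)
    have e3 : pd μ (fun y => g j (fun i => z i y) * (starRingEnd ℂ) (pd μ (z j) y)) x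
        = pd μ (fun y => g j (fun i => z i y)) x * (starRingEnd ℂ) (pd μ (z j) x)
          + g j (fun i => z i x) * pd μ (fun y => (starRingEnd ℂ) (pd μ (z j) y)) x :=
      pd_mul μ _ _ x (hgZ j x) (hconjd μ j x)
    have e4 := pd_comp (f j) (hf j) z μ x (fun i => (hzd i).differentiableAt)
    have e5 := pd_comp (g j) (hg j) z μ x (fun i => (hzd i).differentiableAt)
    have e6 : pd μ (fun y => (starRingEnd ℂ) (pd μ (z j) y)) x
        = (starRingEnd ℂ) (pd μ (pd μ (z j)) x) :=
      pd_conj μ (pd μ (z j)) x (hpdd μ j x)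
    rw [e1, e2, e3, e4, e5, e6]
    ring
  have hW' : ∀ j : Fin M, pd 0 (pd 0 (z j)) x
      - ∑ l : Fin n, pd l.succ (pd l.succ (z j)) x = 0 := by
    intro j
    have := hwave j x
    simpa [box2] using this
  have hWc' : ∀ j : Fin M, (starRingEnd ℂ) (pd 0 (pd 0 (z j)) x)
      - ∑ l : Fin n, (starRingEnd ℂ) (pd l.succ (pd l.succ (z j)) x) = 0 := by
    intro j
    have h := congrArg (starRingEnd ℂ) (hW' j)
    simpa [map_sub, map_sum] using h
  have hQc' : ∀ i j : Fin M, (starRingEnd ℂ) (pd 0 (z i) x) * (starRingEnd ℂ) (pd 0 (z j) x)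
      - ∑ l : Fin n, (starRingEnd ℂ) (pd l.succ (z i) x) * (starRingEnd ℂ) (pd l.succ (z j) x)
      = 0 := by
    intro i j
    have h := congrArg (starRingEnd ℂ) (hnull i j x)
    simpa [map_sub, map_sum, map_mul] using h
  rw [hJ]
  simp only []
  rw [hE 0]
  rw [Finset.sum_congr rfl fun (l : Fin n) _ => hE l.succ]
  exact algebra_key (fun μ j => pd μ (z j) x)
    (fun μ j => (starRingEnd ℂ) (pd μ (z j) x))
    (fun μ j => pd μ (pd μ (z j)) x)
    (fun μ j => (starRingEnd ℂ) (pd μ (pd μ (z j)) x))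
    (fun j => f j (fun i => z i x)) (fun j => g j (fun i => z i x))
    (fun j k => wD k (f j) (fun i => z i x))
    (fun j k => wDbar k (f j) (fun i => z i x))
    (fun j k => wD k (g j) (fun i => z i x))
    (fun j k => wDbar k (g j) (fun i => z i x))
    (fun i j => hnull i j x) hQc' hW' hWc'
    (fun j k => hcond j k (fun i => z i x))
end

section
/- Let a₀,…,a_n, b : ℂ → ℂ be holomorphic with a₀(w)² − Σ_{j=1}^n a_j(w)² = 0 for all w, and let u : Ω → ℂ be a C² function implicitly defined by Σ_{μ=0}^n a_μ(u)x_μ − b(u) = 0 with δ' = Σ_μ a_μ'(u)x_μ − b'(u) nonvanishing. Then u satisfies both □₂u = 0 and ∂^μu ∂_μu = 0, i.e., u is a solution of the CP¹-submodel. -/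
lemma key1 {n : ℕ} (a : Fin (n+1) → ℂ → ℂ) (b : ℂ → ℂ)
    (ha : ∀ μ, Differentiable ℂ (a μ)) (hb : Differentiable ℂ b)
    (Ω : Set (Fin (n+1) → ℝ)) (hΩ : IsOpen Ω)
    (u : (Fin (n+1) → ℝ) → ℂ) (hu : ContDiffOn ℝ 2 u Ω)
    (himp : ∀ x ∈ Ω, ∑ μ, a μ (u x) * (x μ : ℂ) - b (u x) = 0)
    {x : Fin (n+1) → ℝ} (hx : x ∈ Ω) (ν : Fin (n+1)) :
    (∑ μ, deriv (a μ) (u x) * (x μ : ℂ) - deriv b (u x)) * pd ν u x + a ν (u x) = 0 := by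
  have hud : DifferentiableAt ℝ u x :=
    (hu.differentiableOn (by norm_num)).differentiableAt (hΩ.mem_nhds hx)
  set L := fderiv ℝ u x with hL
  have hcomp : ∀ f : ℂ → ℂ, Differentiable ℂ f →
      HasFDerivAt (fun y => f (u y)) (deriv f (u x) • L) x := fun f hf =>
    HasDerivAt.comp_hasFDerivAt x (hf (u x)).hasDerivAt hud.hasFDerivAt
  have hcoord : ∀ μ : Fin (n+1), HasFDerivAt (fun y : Fin (n+1) → ℝ => ((y μ : ℝ) : ℂ))
      (Complex.ofRealCLM.comp (ContinuousLinearMap.proj μ)) x :=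
    by
    intro μ
    exact (Complex.ofRealCLM.comp
      (ContinuousLinearMap.proj μ : (Fin (n+1) → ℝ) →L[ℝ] ℝ)).hasFDerivAt
  have hG : HasFDerivAt (fun y => ∑ μ, a μ (u y) * ((y μ : ℝ) : ℂ) - b (u y))
      ((∑ μ, (a μ (u x) • (Complex.ofRealCLM.comp (ContinuousLinearMap.proj μ)) +
        ((x μ : ℝ) : ℂ) • (deriv (a μ) (u x) • L))) - deriv b (u x) • L) x :=
    (HasFDerivAt.fun_sum fun μ _ => (hcomp _ (ha μ)).mul (hcoord μ)).sub (hcomp _ hb)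
  have h0 : HasFDerivAt (fun y => ∑ μ, a μ (u y) * ((y μ : ℝ) : ℂ) - b (u y))
      (0 : (Fin (n+1) → ℝ) →L[ℝ] ℂ) x := by
    have hev : (fun y => ∑ μ, a μ (u y) * ((y μ : ℝ) : ℂ) - b (u y)) =ᶠ[nhds x]
        (fun _ => (0:ℂ)) := by
      filter_upwards [hΩ.mem_nhds hx] with y hy using himp y hy
    exact (hasFDerivAt_const (0:ℂ) x).congr_of_eventuallyEq hev
  have hD := hG.unique h0
  have hDv := DFunLike.congr_fun hD (Pi.single ν (1:ℝ))
  have hsingle : ∀ μ : Fin (n+1), (((Pi.single ν 1 : Fin (n+1) → ℝ) μ : ℝ) : ℂ) = if μ = ν then 1 else 0 := by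
    intro μ; rw [Pi.single_apply]; split <;> simp
  simp only [ContinuousLinearMap.sub_apply, ContinuousLinearMap.sum_apply,
    ContinuousLinearMap.add_apply, ContinuousLinearMap.smul_apply,
    ContinuousLinearMap.comp_apply, ContinuousLinearMap.proj_apply,
    Complex.ofRealCLM_apply, smul_eq_mul, ContinuousLinearMap.zero_apply, hsingle,
    mul_ite, mul_one, mul_zero] at hDv
  rw [Finset.sum_add_distrib, Finset.sum_ite_eq'] at hDv
  simp only [Finset.mem_univ, if_true] at hDv
  have hsum : ∑ μ : Fin (n+1), (x μ : ℂ) * (deriv (a μ) (u x) * L (Pi.single ν 1)) =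
      (∑ μ, deriv (a μ) (u x) * (x μ : ℂ)) * L (Pi.single ν 1) := by
    rw [Finset.sum_mul]; exact Finset.sum_congr rfl fun μ _ => by ring
  rw [hsum] at hDv
  have hpd : pd ν u x = L (Pi.single ν 1) := rfl
  rw [hpd]
  linear_combination hDv

lemma deriv_differentiable {f : ℂ → ℂ} (hf : Differentiable ℂ f) :
    Differentiable ℂ (deriv f) := by
  have h2 : ContDiff ℂ (1 + 1) f := hf.contDiff
  exact ((contDiff_succ_iff_deriv.mp h2).2.2).differentiable one_ne_zero

lemma key2 {n : ℕ} (a : Fin (n+1) → ℂ → ℂ) (b : ℂ → ℂ)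
    (ha : ∀ μ, Differentiable ℂ (a μ)) (hb : Differentiable ℂ b)
    (Ω : Set (Fin (n+1) → ℝ)) (hΩ : IsOpen Ω)
    (u : (Fin (n+1) → ℝ) → ℂ) (hu : ContDiffOn ℝ 2 u Ω)
    (himp : ∀ x ∈ Ω, ∑ μ, a μ (u x) * (x μ : ℂ) - b (u x) = 0)
    {x : Fin (n+1) → ℝ} (hx : x ∈ Ω) (ν : Fin (n+1)) :
    (∑ μ, deriv (a μ) (u x) * (x μ : ℂ) - deriv b (u x)) * pd ν (pd ν u) x
      + (∑ μ, deriv (deriv (a μ)) (u x) * (x μ : ℂ) - deriv (deriv b) (u x)) * (pd ν u x)^2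
      + 2 * deriv (a ν) (u x) * pd ν u x = 0 := by
  have hud : DifferentiableAt ℝ u x :=
    (hu.differentiableOn (by norm_num)).differentiableAt (hΩ.mem_nhds hx)
  set L := fderiv ℝ u x with hL
  have hcomp : ∀ f : ℂ → ℂ, Differentiable ℂ f →
      HasFDerivAt (fun y => f (u y)) (deriv f (u x) • L) x := fun f hf =>
    HasDerivAt.comp_hasFDerivAt x (hf (u x)).hasDerivAt hud.hasFDerivAt
  have hcoord : ∀ μ : Fin (n+1), HasFDerivAt (fun y : Fin (n+1) → ℝ => ((y μ : ℝ) : ℂ))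
      (Complex.ofRealCLM.comp (ContinuousLinearMap.proj μ)) x := by
    intro μ
    exact (Complex.ofRealCLM.comp
      (ContinuousLinearMap.proj μ : (Fin (n+1) → ℝ) →L[ℝ] ℝ)).hasFDerivAt
  -- differentiability of pd ν u
  have hfd : ContDiffOn ℝ 1 (fderiv ℝ u) Ω := hu.fderiv_of_isOpen hΩ (by norm_num)
  have hfdx : DifferentiableAt ℝ (fderiv ℝ u) x :=
    (hfd.differentiableOn one_ne_zero).differentiableAt (hΩ.mem_nhds hx)
  have hpdiff : DifferentiableAt ℝ (pd ν u) x := by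
    have := ((ContinuousLinearMap.apply ℝ ℂ
      (Pi.single ν 1 : Fin (n+1) → ℝ)).differentiableAt).comp x hfdx
    exact this
  set K := fderiv ℝ (pd ν u) x with hK
  have hP : HasFDerivAt (pd ν u) K x := hpdiff.hasFDerivAt
  -- derivative of δ'(y)
  have hA : HasFDerivAt (fun y => ∑ μ, deriv (a μ) (u y) * ((y μ : ℝ) : ℂ) - deriv b (u y))
      ((∑ μ, (deriv (a μ) (u x) • (Complex.ofRealCLM.comp (ContinuousLinearMap.proj μ)) +
        ((x μ : ℝ) : ℂ) • (deriv (deriv (a μ)) (u x) • L))) - deriv (deriv b) (u x) • L) x :=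
    (HasFDerivAt.fun_sum fun μ _ =>
      (hcomp _ (deriv_differentiable (ha μ))).mul (hcoord μ)).sub
      (hcomp _ (deriv_differentiable hb))
  have hΦ := (hA.mul hP).add (hcomp _ (ha ν))
  have h0 : HasFDerivAt (fun y =>
      (∑ μ, deriv (a μ) (u y) * ((y μ : ℝ) : ℂ) - deriv b (u y)) * pd ν u y + a ν (u y))
      (0 : (Fin (n+1) → ℝ) →L[ℝ] ℂ) x := by
    have hev : (fun y =>
        (∑ μ, deriv (a μ) (u y) * ((y μ : ℝ) : ℂ) - deriv b (u y)) * pd ν u y + a ν (u y))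
        =ᶠ[nhds x] (fun _ => (0:ℂ)) := by
      filter_upwards [hΩ.mem_nhds hx] with y hy using
        key1 a b ha hb Ω hΩ u hu himp hy ν
    exact (hasFDerivAt_const (0:ℂ) x).congr_of_eventuallyEq hev
  have hD := hΦ.unique h0
  have hDv := DFunLike.congr_fun hD (Pi.single ν (1:ℝ))
  have hsingle : ∀ μ : Fin (n+1), (((Pi.single ν 1 : Fin (n+1) → ℝ) μ : ℝ) : ℂ)
      = if μ = ν then 1 else 0 := by
    intro μ; rw [Pi.single_apply]; split <;> simp
  simp only [ContinuousLinearMap.sub_apply, ContinuousLinearMap.sum_apply,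
    ContinuousLinearMap.add_apply, ContinuousLinearMap.smul_apply,
    ContinuousLinearMap.comp_apply, ContinuousLinearMap.proj_apply,
    Complex.ofRealCLM_apply, smul_eq_mul, ContinuousLinearMap.zero_apply, hsingle,
    mul_ite, mul_one, mul_zero] at hDv
  rw [Finset.sum_add_distrib, Finset.sum_ite_eq'] at hDv
  simp only [Finset.mem_univ, if_true] at hDv
  have hsum : ∑ μ : Fin (n+1), (x μ : ℂ) * (deriv (deriv (a μ)) (u x) * L (Pi.single ν 1)) =
      (∑ μ, deriv (deriv (a μ)) (u x) * (x μ : ℂ)) * L (Pi.single ν 1) := by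
    rw [Finset.sum_mul]; exact Finset.sum_congr rfl fun μ _ => by ring
  rw [hsum] at hDv
  have hpd : pd ν u x = L (Pi.single ν 1) := rfl
  have hpd2 : pd ν (pd ν u) x = K (Pi.single ν 1) := rfl
  rw [hpd] at hDv
  rw [hpd, hpd2]
  linear_combination hDv

lemma cder {n : ℕ} (a : Fin (n+1) → ℂ → ℂ)
    (ha : ∀ μ, Differentiable ℂ (a μ))
    (hconstraint : ∀ w : ℂ, (a 0 w)^2 - ∑ j : Fin n, (a j.succ w)^2 = 0) (w : ℂ) :
    a 0 w * deriv (a 0) w - ∑ j : Fin n, a j.succ w * deriv (a j.succ) w = 0 := by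
  have hder : ∀ μ : Fin (n+1), HasDerivAt (fun z => (a μ z)^2)
      ((2:ℕ) * (a μ w)^(2-1) * deriv (a μ) w) w := fun μ =>
    ((ha μ w).hasDerivAt).pow 2
  have hc : HasDerivAt (fun z => (a 0 z)^2 - ∑ j : Fin n, (a j.succ z)^2)
      ((2:ℕ) * (a 0 w)^(2-1) * deriv (a 0) w
        - ∑ j : Fin n, (2:ℕ) * (a j.succ w)^(2-1) * deriv (a j.succ) w) w :=
    (hder 0).sub (HasDerivAt.fun_sum fun j _ => hder j.succ)
  have h0 : HasDerivAt (fun z => (a 0 z)^2 - ∑ j : Fin n, (a j.succ z)^2) 0 w := by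
    have : (fun z => (a 0 z)^2 - ∑ j : Fin n, (a j.succ z)^2) = fun _ => (0:ℂ) :=
      funext hconstraint
    rw [this]; exact hasDerivAt_const w 0
  have huniq := hc.unique h0
  have hs : ∑ j : Fin n, ((2:ℕ):ℂ) * (a j.succ w)^(2-1) * deriv (a j.succ) w
      = 2 * ∑ j : Fin n, a j.succ w * deriv (a j.succ) w := by
    rw [Finset.mul_sum]; exact Finset.sum_congr rfl fun j _ => by push_cast; ring
  rw [hs] at huniq
  push_cast at huniq
  linear_combination huniq / 2

theorem stmt6 {n : ℕ} (a : Fin (n+1) → ℂ → ℂ) (b : ℂ → ℂ)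
    (ha : ∀ μ, Differentiable ℂ (a μ)) (hb : Differentiable ℂ b)
    (hconstraint : ∀ w : ℂ, (a 0 w)^2 - ∑ j : Fin n, (a j.succ w)^2 = 0)
    (Ω : Set (Fin (n+1) → ℝ)) (hΩ : IsOpen Ω)
    (u : (Fin (n+1) → ℝ) → ℂ) (hu : ContDiffOn ℝ 2 u Ω)
    (himp : ∀ x ∈ Ω, ∑ μ, a μ (u x) * (x μ : ℂ) - b (u x) = 0)
    (hδ' : ∀ x ∈ Ω, ∑ μ, deriv (a μ) (u x) * (x μ : ℂ) - deriv b (u x) ≠ 0) :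
    (∀ x ∈ Ω, box2 u x = 0) ∧
      (∀ x ∈ Ω, (pd 0 u x)^2 - ∑ j : Fin n, (pd j.succ u x)^2 = 0) := by
  have main2 : ∀ x ∈ Ω, (pd 0 u x)^2 - ∑ j : Fin n, (pd j.succ u x)^2 = 0 := by
    intro x hx
    set δ1 := ∑ μ, deriv (a μ) (u x) * (x μ : ℂ) - deriv b (u x) with hδ1
    have hδ := hδ' x hx
    have h1 : ∀ ν, δ1 * pd ν u x = -(a ν (u x)) := fun ν => by
      linear_combination key1 a b ha hb Ω hΩ u hu himp hx ν
    have e : ∀ ν, δ1^2 * (pd ν u x)^2 = (a ν (u x))^2 := fun ν => by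
      calc δ1^2 * (pd ν u x)^2 = (δ1 * pd ν u x)^2 := by ring
      _ = (a ν (u x))^2 := by rw [h1 ν]; ring
    have hsq : δ1^2 * ((pd 0 u x)^2 - ∑ j : Fin n, (pd j.succ u x)^2) = 0 := by
      rw [mul_sub, Finset.mul_sum]
      rw [e 0, Finset.sum_congr rfl fun j _ => e j.succ]
      exact hconstraint (u x)
    exact (mul_eq_zero.mp hsq).resolve_left (pow_ne_zero 2 hδ)
  refine ⟨?_, main2⟩
  intro x hx
  set δ1 := ∑ μ, deriv (a μ) (u x) * (x μ : ℂ) - deriv b (u x) with hδ1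
  set δ2 := ∑ μ, deriv (deriv (a μ)) (u x) * (x μ : ℂ) - deriv (deriv b) (u x) with hδ2
  have hδ := hδ' x hx
  have h1 : ∀ ν, δ1 * pd ν u x = -(a ν (u x)) := fun ν => by
    linear_combination key1 a b ha hb Ω hΩ u hu himp hx ν
  have h2 : ∀ ν, δ1 * pd ν (pd ν u) x
      = -(δ2 * (pd ν u x)^2) - 2 * deriv (a ν) (u x) * pd ν u x := fun ν => by
    linear_combination key2 a b ha hb Ω hΩ u hu himp hx ν
  -- first-order contraction of deriv a with pd
  have hdp : δ1 * (deriv (a 0) (u x) * pd 0 u x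
      - ∑ j : Fin n, deriv (a j.succ) (u x) * pd j.succ u x) = 0 := by
    rw [mul_sub, Finset.mul_sum]
    have e : ∀ ν, δ1 * (deriv (a ν) (u x) * pd ν u x)
        = -(a ν (u x) * deriv (a ν) (u x)) := fun ν => by
      calc δ1 * (deriv (a ν) (u x) * pd ν u x)
          = deriv (a ν) (u x) * (δ1 * pd ν u x) := by ring
        _ = -(a ν (u x) * deriv (a ν) (u x)) := by rw [h1 ν]; ring
    rw [e 0, Finset.sum_congr rfl fun j _ => e j.succ]
    have := cder a ha hconstraint (u x)
    rw [Finset.sum_neg_distrib]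
    linear_combination -this
  have hdp0 : deriv (a 0) (u x) * pd 0 u x
      - ∑ j : Fin n, deriv (a j.succ) (u x) * pd j.succ u x = 0 :=
    (mul_eq_zero.mp hdp).resolve_left hδ
  have hbox : δ1 * box2 u x = 0 := by
    simp only [box2]
    rw [mul_sub, Finset.mul_sum]
    rw [h2 0, Finset.sum_congr rfl fun j _ => h2 j.succ]
    have hA : ∑ j : Fin n, (-(δ2 * (pd j.succ u x)^2)
        - 2 * deriv (a j.succ) (u x) * pd j.succ u x)
        = -(δ2 * ∑ j : Fin n, (pd j.succ u x)^2)
          - 2 * ∑ j : Fin n, deriv (a j.succ) (u x) * pd j.succ u x := by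
      rw [Finset.sum_sub_distrib, Finset.sum_neg_distrib, Finset.mul_sum, Finset.mul_sum]
      congr 1
      exact Finset.sum_congr rfl fun j _ => by ring
    rw [hA]
    linear_combination (-δ2) * main2 x hx - 2 * hdp0
  exact (mul_eq_zero.mp hbox).resolve_left hδ
end
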